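/- For d > 0 and α ∈ (0, π), define f(t) = arcsinh( sin α · sinh t / (cosh t − cos α · sinh t) ) + arcsinh( sin α · sinh(d−t) / (cosh t − cos α · sinh t) ) on (0, d). If t ∈ (0,d) satisfies f'(t) = 0, then tanh(2t) = 2 cos α / (1 + cos² α), equivalently tanh t = cos α. -/

import Mathlib

open Real

/-- The hyperbolic denominator `cosh u - c * sinh u` is positive when `|c| ≤ 1`. -/
lemma aux_gpos {c : ℝ} (hc : |c| ≤ 1) (u : ℝ) : 0 < Real.cosh u - c * Real.sinh u := by
  have h1 : Real.cosh u - Real.sinh u = Real.exp (-u) := Real.cosh_sub_sinh u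
  have h2 : Real.cosh u + Real.sinh u = Real.exp u := Real.cosh_add_sinh u
  have e1 : 0 < Real.exp (-u) := Real.exp_pos _
  have e2 : 0 < Real.exp u := Real.exp_pos _
  have habs : |Real.sinh u| < Real.cosh u := by
    rw [abs_lt]; constructor <;> nlinarith
  have : c * Real.sinh u ≤ |Real.sinh u| := by
    calc c * Real.sinh u ≤ |c * Real.sinh u| := le_abs_self _
    _ = |c| * |Real.sinh u| := abs_mul _ _
    _ ≤ 1 * |Real.sinh u| := by
        exact mul_le_mul_of_nonneg_right hc (abs_nonneg _)
    _ = |Real.sinh u| := one_mul _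
  linarith

/-- The key algebraic factorization. -/
lemma aux_key (x y p q c s : ℝ) (h1 : y ^ 2 - x ^ 2 = 1) (h2 : q ^ 2 - p ^ 2 = 1)
    (h3 : s ^ 2 + c ^ 2 = 1) :
    (y - c * x) ^ 2 + s ^ 2 * p ^ 2 -
      ((q * y + p * x) - c * (p * y + q * x)) ^ 2 * ((y - c * x) ^ 2 + s ^ 2 * x ^ 2)
    = -(2 * (p * y + q * x) * (y - c * x) *
        ((q * y + p * x) - c * (p * y + q * x)) * (x - c * y)) := by
  linear_combination (1 + -1*q^2 + p^2*c^2 + -1*y^2*q^2 + y^2*p^2*c^2 + 2*x*y*q^2*c +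
      -2*x*y*p^2*c + x^2*q^2 + -1*x^2*q^2*s^2 + -2*x^2*q^2*c^2 + -2*x^2*p*q*c +
      2*x^2*p*q*c*s^2 + 2*x^2*p*q*c^3 + x^2*p^2 + x^2*p^2*c^2 + -1*x^2*p^2*c^2*s^2 +
      -1*x^2*p^2*c^4) * h1 +
    (-1 + 2*x*y*c + -1*x^2*s^2 + -2*x^2*c^2 + -2*x^3*y*c + 2*x^3*y*c*s^2 + 2*x^3*y*c^3 +
      x^4 + -1*x^4*s^2 + -1*x^4*c^2*s^2 + -1*x^4*c^4) * h2 +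
    (p^2 + -1*x^2 + 2*x^2*p*q*c + -1*x^2*p^2 + -1*x^2*p^2*c^2 + 2*x^3*y*c + -2*x^3*y*p*q +
      -2*x^3*y*p*q*c^2 + 4*x^3*y*p^2*c + -1*x^4 + -1*x^4*c^2 + 4*x^4*p*q*c + -2*x^4*p^2 +
      -2*x^4*p^2*c^2) * h3

set_option maxHeartbeats 2000000 in
/-- Critical points of the width function of a hyperbolic segment. -/
theorem stmt0 (d α : ℝ) (hd : 0 < d) (hα : α ∈ Set.Ioo 0 π)
    (f : ℝ → ℝ)
    (hf : ∀ t : ℝ, f t =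
      arsinh (sin α * sinh t / (cosh t - cos α * sinh t)) +
      arsinh (sin α * sinh (d - t) / (cosh t - cos α * sinh t)))
    (t : ℝ) (ht : t ∈ Set.Ioo 0 d) (hcrit : deriv f t = 0) :
    tanh (2 * t) = 2 * cos α / (1 + cos α ^ 2) ∧ tanh t = cos α := by
  obtain ⟨hα0, hαπ⟩ := hα
  obtain ⟨ht0, htd⟩ := ht
  have hs : 0 < sin α := sin_pos_of_pos_of_lt_pi hα0 hαπ
  have hcabs : |cos α| ≤ 1 := abs_cos_le_one α
  have hgt : 0 < cosh t - cos α * sinh t := aux_gpos hcabs t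
  -- derivative of the first summand's inner function
  have hu : HasDerivAt (fun u : ℝ => sin α * sinh u / (cosh u - cos α * sinh u))
      ((sin α * cosh t * (cosh t - cos α * sinh t) -
        sin α * sinh t * (sinh t - cos α * cosh t)) / (cosh t - cos α * sinh t) ^ 2) t :=
    ((Real.hasDerivAt_sinh t).const_mul (sin α)).div
      ((Real.hasDerivAt_cosh t).sub ((Real.hasDerivAt_sinh t).const_mul (cos α))) hgt.ne'
  have hinner : HasDerivAt (fun u : ℝ => d - u) (-1 : ℝ) t := by
    simpa using (hasDerivAt_id t).const_sub d
  have hsdt : HasDerivAt (fun u : ℝ => sinh (d - u)) (cosh (d - t) * (-1)) t :=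
    (Real.hasDerivAt_sinh (d - t)).comp t hinner
  have hv : HasDerivAt (fun u : ℝ => sin α * sinh (d - u) / (cosh u - cos α * sinh u))
      ((sin α * (cosh (d - t) * (-1)) * (cosh t - cos α * sinh t) -
        sin α * sinh (d - t) * (sinh t - cos α * cosh t)) / (cosh t - cos α * sinh t) ^ 2) t :=
    (hsdt.const_mul (sin α)).div
      ((Real.hasDerivAt_cosh t).sub ((Real.hasDerivAt_sinh t).const_mul (cos α))) hgt.ne'
  have hA := (Real.hasDerivAt_arsinh
      (sin α * sinh t / (cosh t - cos α * sinh t))).comp t hu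
  have hB := (Real.hasDerivAt_arsinh
      (sin α * sinh (d - t) / (cosh t - cos α * sinh t))).comp t hv
  have hfeq : f = fun u : ℝ =>
      arsinh (sin α * sinh u / (cosh u - cos α * sinh u)) +
      arsinh (sin α * sinh (d - u) / (cosh u - cos α * sinh u)) := funext hf
  have hF : HasDerivAt f
      ((√(1 + (sin α * sinh t / (cosh t - cos α * sinh t)) ^ 2))⁻¹ *
        ((sin α * cosh t * (cosh t - cos α * sinh t) -
          sin α * sinh t * (sinh t - cos α * cosh t)) / (cosh t - cos α * sinh t) ^ 2) +
       (√(1 + (sin α * sinh (d - t) / (cosh t - cos α * sinh t)) ^ 2))⁻¹ *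
        ((sin α * (cosh (d - t) * (-1)) * (cosh t - cos α * sinh t) -
          sin α * sinh (d - t) * (sinh t - cos α * cosh t)) / (cosh t - cos α * sinh t) ^ 2)) t := by
    rw [hfeq]
    exact hA.add hB
  have heq0 := hF.deriv.symm.trans hcrit
  -- abbreviations
  set c := cos α with hc
  set x := sinh t with hxd
  set y := cosh t with hyd
  set p := sinh (d - t) with hpd
  set q := cosh (d - t) with hqd
  have hx : 0 < x := Real.sinh_pos_iff.mpr ht0
  have hp : 0 < p := Real.sinh_pos_iff.mpr (by linarith)
  have hy : 0 < y := Real.cosh_pos t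
  have hq : 0 < q := Real.cosh_pos (d - t)
  have hyx : y ^ 2 - x ^ 2 = 1 := Real.cosh_sq_sub_sinh_sq t
  have hqp : q ^ 2 - p ^ 2 = 1 := Real.cosh_sq_sub_sinh_sq (d - t)
  have hsc : sin α ^ 2 + c ^ 2 = 1 := sin_sq_add_cos_sq α
  set g := y - c * x with hgd
  have hg : 0 < g := hgt
  -- addition formulas
  have hSd : sinh d = p * y + q * x := by
    rw [show d = (d - t) + t by ring, Real.sinh_add]
  have hCd : cosh d = q * y + p * x := by
    rw [show d = (d - t) + t by ring, Real.cosh_add]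
  set G := cosh d - c * sinh d with hGd
  have hG : 0 < G := aux_gpos hcabs d
  have hGeq : G = (q * y + p * x) - c * (p * y + q * x) := by rw [hGd, hSd, hCd]
  -- simplify the two square roots
  have hC2pos : 0 < g ^ 2 + sin α ^ 2 * x ^ 2 := by positivity
  have hSpos : 0 < g ^ 2 + sin α ^ 2 * p ^ 2 := by positivity
  have hsq1 : √(1 + (sin α * x / g) ^ 2) = √(g ^ 2 + sin α ^ 2 * x ^ 2) / g := by
    rw [show 1 + (sin α * x / g) ^ 2 = (g ^ 2 + sin α ^ 2 * x ^ 2) / g ^ 2 by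
        field_simp,
      Real.sqrt_div hC2pos.le, Real.sqrt_sq hg.le]
  have hsq2 : √(1 + (sin α * p / g) ^ 2) = √(g ^ 2 + sin α ^ 2 * p ^ 2) / g := by
    rw [show 1 + (sin α * p / g) ^ 2 = (g ^ 2 + sin α ^ 2 * p ^ 2) / g ^ 2 by
        field_simp,
      Real.sqrt_div hSpos.le, Real.sqrt_sq hg.le]
  set a := √(g ^ 2 + sin α ^ 2 * x ^ 2) with had
  set b := √(g ^ 2 + sin α ^ 2 * p ^ 2) with hbd
  have ha : 0 < a := Real.sqrt_pos.mpr hC2pos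
  have hb : 0 < b := Real.sqrt_pos.mpr hSpos
  have ha2 : a ^ 2 = g ^ 2 + sin α ^ 2 * x ^ 2 := Real.sq_sqrt hC2pos.le
  have hb2 : b ^ 2 = g ^ 2 + sin α ^ 2 * p ^ 2 := Real.sq_sqrt hSpos.le
  -- simplify the numerators
  have hnum1 : sin α * y * g - sin α * x * (x - c * y) = sin α := by
    rw [hgd]; linear_combination (sin α) * hyx
  have hnum2 : sin α * (q * (-1)) * g - sin α * p * (x - c * y) = -(sin α * G) := by
    rw [hgd, hGeq]; ring
  rw [hsq1, hsq2, hnum1, hnum2] at heq0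
  -- heq0 : (a/g)⁻¹ * (sin α / g^2) + (b/g)⁻¹ * (-(sin α * G) / g^2) = 0
  have hane : a ≠ 0 := ha.ne'
  have hbne : b ≠ 0 := hb.ne'
  have hgne : g ≠ 0 := hg.ne'
  field_simp at heq0
  -- heq0 : g * sin α * (b * g ^ 2) + -(g * (sin α * G) * (a * g ^ 2)) = 0
  have h1 : sin α * g ^ 3 * (b - G * a) = 0 := by linear_combination g ^ 3 * heq0
  have hne : sin α * g ^ 3 ≠ 0 := by positivity
  have hba : b = G * a := by
    have h2 := (mul_eq_zero.mp h1).resolve_left hne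
    linarith
  have hS : g ^ 2 + sin α ^ 2 * p ^ 2 = G ^ 2 * (g ^ 2 + sin α ^ 2 * x ^ 2) := by
    have h2 : b ^ 2 = (G * a) ^ 2 := by rw [hba]
    rw [hb2, show (G * a) ^ 2 = G ^ 2 * a ^ 2 by ring, ha2] at h2
    exact h2
  have hfac : g ^ 2 + sin α ^ 2 * p ^ 2 - G ^ 2 * (g ^ 2 + sin α ^ 2 * x ^ 2) =
      -(2 * (p * y + q * x) * g * G * (x - c * y)) := by
    rw [hGeq, hgd]
    exact aux_key x y p q c (sin α) hyx hqp hsc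
  have h0 : 2 * (p * y + q * x) * g * G * (x - c * y) = 0 := by
    rw [hS] at hfac; linarith
  have hpyqx : 0 < p * y + q * x := by positivity
  have hfacpos : 0 < 2 * (p * y + q * x) * g * G := by positivity
  have hxcy : x = c * y := by
    have h2 := (mul_eq_zero.mp h0).resolve_left hfacpos.ne'
    linarith
  have h1c : (0:ℝ) < 1 + c ^ 2 := by positivity
  constructor
  · rw [Real.tanh_eq_sinh_div_cosh, Real.sinh_two_mul, Real.cosh_two_mul, ← hyd, ← hxd, hxcy]
    have hden : 0 < y ^ 2 + (c * y) ^ 2 :=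
      lt_of_lt_of_le (pow_pos hy 2) (le_add_of_nonneg_right (sq_nonneg _))
    rw [div_eq_div_iff hden.ne' h1c.ne']
    ring
  · rw [Real.tanh_eq_sinh_div_cosh, ← hyd, ← hxd, hxcy, mul_div_assoc, div_self hy.ne', mul_one]
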